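/- Let f₀:[0,1]→ℝ be C¹, strictly increasing with inf_{r∈(0,1]} f₀'(r)/r > 0, and let Ω > κ₂ := ∫₀¹ s f₀(s) ds. Define ν_Ω(r) = (f₀'(r)/r)/(Ω − ∫₀¹ s f₀(rs) ds) for r∈(0,1]. Then for every θ∈[0,1] there is a constant C₀ depending only on f₀ such that (f₀'(r)/r)/(Ω − κ₁) ≤ ν_Ω(r) ≤ C₀ (Ω − κ₂)^{−θ} (f₀'(r)/r) (1−r)^{θ−1} for all r∈(0,1), where κ₁ = f₀(0)/2. -/

import Mathlib

open MeasureTheory Set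

lemma stmt8_aux_alg (P Q A N C : ℝ) (hP : 0 < P) (hQ : 0 < Q) (hA : 0 < A) (hN : 0 < N)
    (h : P * Q ≤ C * A) : N / A ≤ C * P⁻¹ * N * Q⁻¹ := by
  rw [div_le_iff₀ hA, show C * P⁻¹ * N * Q⁻¹ * A = N * (C * A) / (P * Q) by field_simp,
    le_div_iff₀ (mul_pos hP hQ)]
  nlinarith [mul_le_mul_of_nonneg_left h hN.le]

theorem stmt8 (f₀ f₀' : ℝ → ℝ)
    (hd : ∀ r ∈ Set.Icc (0:ℝ) 1, HasDerivWithinAt f₀ (f₀' r) (Set.Icc 0 1) r)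
    (hc : ContinuousOn f₀' (Set.Icc 0 1))
    (hlow : ∃ c > 0, ∀ r ∈ Set.Ioc (0:ℝ) 1, c ≤ f₀' r / r) :
    ∃ C₀ > 0, ∀ Ω : ℝ, (∫ s in (0:ℝ)..1, s * f₀ s) < Ω →
      ∀ θ ∈ Set.Icc (0:ℝ) 1, ∀ r ∈ Set.Ioo (0:ℝ) 1,
        (f₀' r / r) / (Ω - f₀ 0 / 2)
            ≤ (f₀' r / r) / (Ω - ∫ s in (0:ℝ)..1, s * f₀ (r * s)) ∧
        (f₀' r / r) / (Ω - ∫ s in (0:ℝ)..1, s * f₀ (r * s))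
            ≤ C₀ * (Ω - ∫ s in (0:ℝ)..1, s * f₀ s) ^ (-θ) * (f₀' r / r)
              * (1 - r) ^ (θ - 1) := by
  obtain ⟨c, hc0, hcle⟩ := hlow
  have hf₀c : ContinuousOn f₀ (Set.Icc 0 1) := fun x hx => (hd x hx).continuousWithinAt
  have hIcc : Set.uIcc (0:ℝ) 1 = Set.Icc 0 1 := by rw [Set.uIcc_of_le]; norm_num
  -- f₀ is monotone on [0,1]
  have hmono : MonotoneOn f₀ (Set.Icc 0 1) := by
    apply monotoneOn_of_hasDerivWithinAt_nonneg (convex_Icc 0 1) hf₀c (f' := f₀')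
      (fun x hx => (hd x (interior_subset hx)).mono interior_subset)
    intro x hx
    rw [interior_Icc] at hx
    have h1 := hcle x ⟨hx.1, hx.2.le⟩
    have h2 := (le_div_iff₀ hx.1).mp h1
    nlinarith [mul_pos hc0 hx.1]
  -- t ↦ f₀ t - c/2 t² is monotone on [0,1]
  have hmono2 : MonotoneOn (fun t => f₀ t - c / 2 * t ^ 2) (Set.Icc 0 1) := by
    apply monotoneOn_of_hasDerivWithinAt_nonneg (convex_Icc 0 1)
      (f' := fun t => f₀' t - c * t)
      (hf₀c.sub (Continuous.continuousOn (by continuity)))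
    · intro x hx
      have h1 := (hd x (interior_subset hx)).mono (interior_subset)
      have h2 : HasDerivWithinAt (fun t => c / 2 * t ^ 2) (c * x)
          (interior (Set.Icc (0:ℝ) 1)) x := by
        have := ((hasDerivAt_pow 2 x).const_mul (c / 2)).hasDerivWithinAt
          (s := interior (Set.Icc (0:ℝ) 1))
        refine this.congr_deriv ?_
        push_cast
        ring
      exact h1.sub h2
    · intro x hx
      rw [interior_Icc] at hx
      have h1 := (le_div_iff₀ hx.1).mp (hcle x ⟨hx.1, hx.2.le⟩)
      linarith
  -- integrability
  have hint : ∀ ρ ∈ Set.Icc (0:ℝ) 1,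
      IntervalIntegrable (fun s => s * f₀ (ρ * s)) volume 0 1 := by
    intro ρ hρ
    apply ContinuousOn.intervalIntegrable
    rw [hIcc]
    exact continuousOn_id.mul (hf₀c.comp ((continuous_const.mul continuous_id).continuousOn)
      (fun s hs => ⟨mul_nonneg hρ.1 hs.1, mul_le_one₀ hρ.2 hs.1 hs.2⟩))
  have int_f : IntervalIntegrable (fun s => s * f₀ s) volume 0 1 := by
    apply ContinuousOn.intervalIntegrable
    rw [hIcc]
    exact continuousOn_id.mul hf₀c
  refine ⟨max 1 (8 / c), lt_of_lt_of_le one_pos (le_max_left _ _), ?_⟩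
  intro Ω hΩ θ hθ r hr
  obtain ⟨hr0, hr1⟩ := hr
  have hrIcc : r ∈ Set.Icc (0:ℝ) 1 := ⟨hr0.le, hr1.le⟩
  have int_g := hint r hrIcc
  set κ₂ := ∫ s in (0:ℝ)..1, s * f₀ s with hκ₂
  set g := ∫ s in (0:ℝ)..1, s * f₀ (r * s) with hg
  -- g ≤ κ₂
  have hgκ₂ : g ≤ κ₂ := by
    apply intervalIntegral.integral_mono_on zero_le_one int_g int_f
    intro s hs
    have : f₀ (r * s) ≤ f₀ s := by
      apply hmono ⟨mul_nonneg hr0.le hs.1, mul_le_one₀ hr1.le hs.1 hs.2⟩ hs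
      nlinarith [hs.1, hs.2]
    exact mul_le_mul_of_nonneg_left this hs.1
  -- κ₁ ≤ g
  have hκ₁g : f₀ 0 / 2 ≤ g := by
    have h1 : (∫ s in (0:ℝ)..1, s * f₀ 0) ≤ g := by
      apply intervalIntegral.integral_mono_on zero_le_one ?_ int_g
      · intro s hs
        refine mul_le_mul_of_nonneg_left ?_ hs.1
        apply hmono (left_mem_Icc.mpr zero_le_one)
          ⟨mul_nonneg hr0.le hs.1, mul_le_one₀ hr1.le hs.1 hs.2⟩
        exact mul_nonneg hr0.le hs.1
      · exact (Continuous.intervalIntegrable (by continuity) 0 1)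
    have h2 : (∫ s in (0:ℝ)..1, s * f₀ 0) = f₀ 0 / 2 := by
      rw [intervalIntegral.integral_mul_const, integral_id]
      ring
    linarith
  -- g + c(1-r)/8 ≤ κ₂
  have hgap : g + c * (1 - r) / 8 ≤ κ₂ := by
    have int_p : IntervalIntegrable (fun s : ℝ => c * (1 - r) / 2 * s ^ 3) volume 0 1 :=
      (Continuous.intervalIntegrable (by continuity) 0 1)
    have h1 : (∫ s in (0:ℝ)..1, (s * f₀ (r * s) + c * (1 - r) / 2 * s ^ 3)) ≤ κ₂ := by
      apply intervalIntegral.integral_mono_on zero_le_one (int_g.add int_p) int_f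
      intro s hs
      have hrs : r * s ∈ Set.Icc (0:ℝ) 1 :=
        ⟨mul_nonneg hr0.le hs.1, mul_le_one₀ hr1.le hs.1 hs.2⟩
      have h2 : f₀ (r * s) - c / 2 * (r * s) ^ 2 ≤ f₀ s - c / 2 * s ^ 2 := by
        apply hmono2 hrs hs
        nlinarith [hs.1, hs.2]
      nlinarith [mul_le_mul_of_nonneg_left h2 hs.1,
        mul_nonneg (mul_nonneg hc0.le (pow_nonneg hs.1 3))
          (mul_nonneg hr0.le (by linarith : (0:ℝ) ≤ 1 - r))]
    have h2 : (∫ s in (0:ℝ)..1, (s * f₀ (r * s) + c * (1 - r) / 2 * s ^ 3))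
        = g + c * (1 - r) / 8 := by
      rw [intervalIntegral.integral_add int_g int_p, intervalIntegral.integral_const_mul,
        integral_pow]
      norm_num
      ring
    linarith [h1, h2.symm.le]
  have h1r : (0:ℝ) < 1 - r := by linarith
  have hB : 0 < Ω - κ₂ := by linarith
  have hA : 0 < Ω - g := by linarith
  have hN : 0 < f₀' r / r := lt_of_lt_of_le hc0 (hcle r ⟨hr0, hr1.le⟩)
  constructor
  · -- lower bound
    have hAle : Ω - g ≤ Ω - f₀ 0 / 2 := by linarith
    exact div_le_div_of_nonneg_left hN.le hA hAle
  · -- upper bound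
    set C₀ := max 1 (8 / c) with hC₀
    have hC0 : (0:ℝ) < C₀ := lt_of_lt_of_le one_pos (le_max_left _ _)
    have h8c : (0:ℝ) < 8 / c := by positivity
    -- key: (Ω-κ₂)^θ * (1-r)^(1-θ) ≤ C₀ * (Ω-g)
    have hkey : (Ω - κ₂) ^ θ * (1 - r) ^ (1 - θ) ≤ C₀ * (Ω - g) := by
      have e1 : (Ω - κ₂) ^ θ ≤ (Ω - g) ^ θ :=
        Real.rpow_le_rpow hB.le (by linarith) hθ.1
      have e2 : (1 - r) ^ (1 - θ) ≤ (8 / c * (Ω - g)) ^ (1 - θ) := by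
        apply Real.rpow_le_rpow h1r.le ?_ (by linarith [hθ.2])
        rw [div_mul_eq_mul_div, le_div_iff₀ hc0]
        linarith [hgap]
      have e3 : (8 / c * (Ω - g)) ^ (1 - θ) = (8 / c) ^ (1 - θ) * (Ω - g) ^ (1 - θ) :=
        Real.mul_rpow h8c.le hA.le
      have e4 : (Ω - g) ^ θ * (Ω - g) ^ (1 - θ) = Ω - g := by
        rw [← Real.rpow_add hA]
        norm_num
      have e5 : (8 / c) ^ (1 - θ) ≤ C₀ := by
        rcases le_or_gt 1 (8 / c) with h | h
        · calc (8 / c) ^ (1 - θ) ≤ (8 / c) ^ (1:ℝ) :=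
                Real.rpow_le_rpow_of_exponent_le h (by linarith [hθ.1])
            _ = 8 / c := Real.rpow_one _
            _ ≤ C₀ := le_max_right _ _
        · calc (8 / c) ^ (1 - θ) ≤ 1 := Real.rpow_le_one h8c.le h.le (by linarith [hθ.2])
            _ ≤ C₀ := le_max_left _ _
      have e6 : (Ω - κ₂) ^ θ * (1 - r) ^ (1 - θ)
          ≤ (Ω - g) ^ θ * ((8 / c) ^ (1 - θ) * (Ω - g) ^ (1 - θ)) := by
        rw [← e3]
        exact mul_le_mul e1 e2 (Real.rpow_nonneg h1r.le _) (Real.rpow_nonneg hA.le _)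
      calc (Ω - κ₂) ^ θ * (1 - r) ^ (1 - θ)
          ≤ (8 / c) ^ (1 - θ) * ((Ω - g) ^ θ * (Ω - g) ^ (1 - θ)) := by
            rw [show (8/c) ^ (1-θ) * ((Ω - g) ^ θ * (Ω - g) ^ (1-θ))
              = (Ω - g) ^ θ * ((8/c) ^ (1-θ) * (Ω - g) ^ (1-θ)) by ring]
            exact e6
        _ = (8 / c) ^ (1 - θ) * (Ω - g) := by rw [e4]
        _ ≤ C₀ * (Ω - g) := mul_le_mul_of_nonneg_right e5 hA.le
    have hP : 0 < (Ω - κ₂) ^ θ := Real.rpow_pos_of_pos hB θ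
    have hQ : 0 < (1 - r) ^ (1 - θ) := Real.rpow_pos_of_pos h1r _
    have hneg1 : (Ω - κ₂) ^ (-θ) = ((Ω - κ₂) ^ θ)⁻¹ := Real.rpow_neg hB.le θ
    have hneg2 : (1 - r) ^ (θ - 1) = ((1 - r) ^ (1 - θ))⁻¹ := by
      rw [show θ - 1 = -(1 - θ) by ring, Real.rpow_neg h1r.le]
    rw [hneg1, hneg2]
    exact stmt8_aux_alg _ _ _ _ _ hP hQ hA hN hkey
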